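/- Fix an integer J ≥ 1 and reals α > 0, Σ₀ > 0 and Ȳ. Let G ~ Gamma(α + J/2, 1) and Z ~ N(0,1) be independent, and for x > 0 define the random variable D_x = G · J² · |Ȳ/(xJ+1) − Z/√(xJ+1)| · |Ȳ/(xJ+1)² − Z/(2(xJ+1)^{3/2})| / (Σ₀ + (J/2)(Ȳ/(xJ+1) − Z/√(xJ+1))²)². Then for every x > 0, E[D_x] ≤ r₂, where r₂ = (α + J/2) · (J²/Σ₀²) · (|Ȳ| + 1) · (|Ȳ| + 1/2). -/

import Mathlib

open MeasureTheory ProbabilityTheory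
open scoped ENNReal


open MeasureTheory ProbabilityTheory Real Set
open scoped ENNReal

lemma gamma_mean' {a : ℝ} (ha : 0 < a) :
    ∫⁻ y, ENNReal.ofReal y ∂(gammaMeasure a 1) = ENNReal.ofReal a := by
  rw [gammaMeasure,
    lintegral_withDensity_eq_lintegral_mul _
      (show Measurable (gammaPDF a 1) from (measurable_gammaPDFReal a 1).ennreal_ofReal) ENNReal.measurable_ofReal]
  have key : ∀ y : ℝ, (gammaPDF a 1 * fun y => ENNReal.ofReal y) y
      = Set.indicator (Ici (0:ℝ))
          (fun y => ENNReal.ofReal ((1 / Gamma a) * (y ^ ((a+1) - 1) * exp (-(1 * y))))) y := by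
    intro y
    rcases lt_or_ge y 0 with hy | hy
    · simp [Set.indicator_of_notMem (notMem_Ici.mpr hy), gammaPDF_of_neg hy]
    · rw [Set.indicator_of_mem (mem_Ici.mpr hy)]
      simp only [Pi.mul_apply, gammaPDF_of_nonneg hy]
      rw [← ENNReal.ofReal_mul (by positivity)]
      rcases eq_or_lt_of_le hy with hy0 | hy0
      · subst hy0
        simp [Real.zero_rpow (show a + 1 - 1 ≠ 0 by linarith), Real.zero_rpow ha.ne']
      · congr 1
        have hyy : y ^ (a + 1 - 1) = y ^ (a - 1) * y := by
          rw [show a + 1 - 1 = (a - 1) + 1 by ring, Real.rpow_add hy0, Real.rpow_one]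
        rw [Real.one_rpow, hyy]
        ring
  simp_rw [key]
  rw [lintegral_indicator measurableSet_Ici]
  have hint : IntegrableOn (fun y : ℝ => (1 / Gamma a) * (y ^ ((a+1) - 1) * exp (-(1 * y)))) (Ici 0) := by
    rw [integrableOn_Ici_iff_integrableOn_Ioi]
    refine (((Real.GammaIntegral_convergent (by linarith : 0 < a + 1)).congr_fun
      (fun y hy => ?_) measurableSet_Ioi)).const_mul _
    simp [mul_comm]
  rw [← ofReal_integral_eq_lintegral_ofReal hint]
  · congr 1
    rw [integral_Ici_eq_integral_Ioi, integral_const_mul,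
      integral_rpow_mul_exp_neg_mul_Ioi (by linarith : (0:ℝ) < a + 1) one_pos,
      Real.Gamma_add_one ha.ne']
    rw [show (1:ℝ)/1 = 1 by norm_num, Real.one_rpow, one_mul]
    field_simp
  · filter_upwards [ae_restrict_mem measurableSet_Ici] with y hy
    have : (0:ℝ) ≤ y := hy
    positivity
lemma gauss_sq' : ∫⁻ z, ENNReal.ofReal (z ^ 2) ∂(gaussianReal 0 1) = 1 := by
  have hrpow : ∀ z : ℝ, z ^ (2:ℝ) = z ^ 2 := fun z => by
    rw [show (2:ℝ) = ((2:ℕ):ℝ) by norm_num, Real.rpow_natCast]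
  have hpdf : ∀ z : ℝ, gaussianPDFReal 0 1 z = (Real.sqrt (2 * π))⁻¹ * exp (-(1/2) * z ^ 2) := by
    intro z
    rw [gaussianPDFReal_def]
    simp only [NNReal.coe_one, mul_one, sub_zero]
    congr 1
    congr 1
    ring
  have hint : Integrable (fun z : ℝ => gaussianPDFReal 0 1 z * z ^ 2) := by
    have h := (integrable_rpow_mul_exp_neg_mul_sq (by norm_num : (0:ℝ) < 1/2)
      (by norm_num : (-1:ℝ) < 2)).const_mul (Real.sqrt (2 * π))⁻¹
    refine h.congr (Filter.Eventually.of_forall fun z => ?_)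
    simp only [hrpow, hpdf]
    ring
  have hmeas : Measurable fun z : ℝ => ENNReal.ofReal (z ^ 2) :=
    (measurable_id.pow_const 2).ennreal_ofReal
  rw [gaussianReal_of_var_ne_zero 0 one_ne_zero,
    lintegral_withDensity_eq_lintegral_mul _
      (show Measurable (gaussianPDF 0 1) from (measurable_gaussianPDFReal 0 1).ennreal_ofReal)
      hmeas]
  have key : ∀ z : ℝ, (gaussianPDF 0 1 * fun z => ENNReal.ofReal (z ^ 2)) z
      = ENNReal.ofReal (gaussianPDFReal 0 1 z * z ^ 2) := by
    intro z
    simp only [Pi.mul_apply, gaussianPDF]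
    rw [← ENNReal.ofReal_mul (gaussianPDFReal_nonneg 0 1 z)]
  simp_rw [key]
  rw [← ofReal_integral_eq_lintegral_ofReal hint
    (Filter.Eventually.of_forall fun z => mul_nonneg (gaussianPDFReal_nonneg 0 1 z) (sq_nonneg z))]
  have hval : ∫ z : ℝ, gaussianPDFReal 0 1 z * z ^ 2 = 1 := by
    calc ∫ z : ℝ, gaussianPDFReal 0 1 z * z ^ 2
        = (Real.sqrt (2 * π))⁻¹ * ∫ z : ℝ, z ^ 2 * exp (-(1/2) * z ^ 2) := by
          rw [← integral_const_mul]
          congr 1; funext z; rw [hpdf]; ring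
      _ = (Real.sqrt (2 * π))⁻¹ * (2 * ∫ z in Ioi (0:ℝ), z ^ 2 * exp (-(1/2) * z ^ 2)) := by
          rw [← integral_comp_abs (f := fun t : ℝ => t ^ 2 * exp (-(1/2) * t ^ 2))]
          simp only [sq_abs]
      _ = 1 := by
          have h2 : ∫ z in Ioi (0:ℝ), z ^ 2 * exp (-(1/2) * z ^ 2)
              = ((1:ℝ)/2) ^ (-((2:ℝ) + 1) / 2) * (1 / 2) * Gamma (((2:ℝ) + 1) / 2) := by
            rw [← integral_rpow_mul_exp_neg_mul_rpow (by norm_num : (0:ℝ) < 2)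
              (by norm_num : (-1:ℝ) < 2) (by norm_num : (0:ℝ) < 1/2)]
            refine setIntegral_congr_fun measurableSet_Ioi fun z hz => ?_
            simp only [hrpow]
          rw [h2, show ((2:ℝ) + 1) / 2 = 1/2 + 1 by norm_num,
            Real.Gamma_add_one (by norm_num : (1:ℝ)/2 ≠ 0), Real.Gamma_one_half_eq,
            show (-((2:ℝ) + 1) / 2) = -(3/2) by norm_num,
            Real.rpow_neg (by norm_num : (0:ℝ) ≤ 1/2),
            show ((1:ℝ)/2) ^ ((3:ℝ)/2) = ((1/2) ^ (1:ℝ)) * ((1/2) ^ ((1:ℝ)/2)) by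
              rw [← Real.rpow_add (by norm_num)]; norm_num,
            Real.rpow_one, ← Real.sqrt_eq_rpow, Real.sqrt_mul (by norm_num : (0:ℝ) ≤ 2),
            show Real.sqrt ((1:ℝ)/2) = (Real.sqrt 2)⁻¹ by
              rw [one_div, Real.sqrt_inv]]
          have h2pos : (0:ℝ) < Real.sqrt 2 := Real.sqrt_pos.mpr (by norm_num)
          have hπpos : (0:ℝ) < Real.sqrt π := Real.sqrt_pos.mpr Real.pi_pos
          field_simp
  rw [hval, ENNReal.ofReal_one]

lemma aux_nonpos (J S₀ Ybar t s g z : ℝ) (hg : g ≤ 0) :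
    g * J ^ 2 * |Ybar / t - z / Real.sqrt t| * |Ybar / t ^ 2 - z / (2 * t ^ ((3:ℝ)/2))| /
      (S₀ + (J / 2) * s ^ 2) ^ 2 ≤ 0 := by
  apply div_nonpos_of_nonpos_of_nonneg _ (sq_nonneg _)
  exact mul_nonpos_of_nonpos_of_nonneg
    (mul_nonpos_of_nonpos_of_nonneg
      (mul_nonpos_of_nonpos_of_nonneg hg (sq_nonneg _)) (abs_nonneg _)) (abs_nonneg _)

lemma aux_bound (J S₀ Ybar t g z : ℝ) (hJ1 : 1 ≤ J) (hS₀ : 0 < S₀) (ht : 1 ≤ t)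
    (hg : 0 ≤ g) :
    g * J ^ 2 * |Ybar / t - z / Real.sqrt t| * |Ybar / t ^ 2 - z / (2 * t ^ ((3:ℝ)/2))| /
      (S₀ + (J / 2) * (Ybar / t - z / Real.sqrt t) ^ 2) ^ 2
    ≤ g * ((J ^ 2 / S₀ ^ 2) * (|Ybar| ^ 2 + 3/4 * |Ybar|)
        + (J ^ 2 / S₀ ^ 2) * (3/4 * |Ybar| + 1/2) * z ^ 2) := by
  have ht0 : 0 < t := by linarith
  have hY : 0 ≤ |Ybar| := abs_nonneg _
  have hst : 1 ≤ Real.sqrt t := by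
    rw [show (1:ℝ) = Real.sqrt 1 from (Real.sqrt_one).symm]
    exact Real.sqrt_le_sqrt ht
  have hrt : 1 ≤ t ^ ((3:ℝ)/2) := by
    calc (1:ℝ) = 1 ^ ((3:ℝ)/2) := (Real.one_rpow _).symm
      _ ≤ t ^ ((3:ℝ)/2) := Real.rpow_le_rpow (by norm_num) ht (by norm_num)
  have hA1 : |Ybar / t - z / Real.sqrt t| ≤ |Ybar| + |z| := by
    calc |Ybar / t - z / Real.sqrt t| ≤ |Ybar / t| + |z / Real.sqrt t| := abs_sub _ _
      _ = |Ybar| / t + |z| / Real.sqrt t := by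
          rw [abs_div, abs_div, abs_of_pos ht0, abs_of_pos (by linarith : (0:ℝ) < Real.sqrt t)]
      _ ≤ |Ybar| + |z| := add_le_add (div_le_self hY ht) (div_le_self (abs_nonneg z) hst)
  have hA2 : |Ybar / t ^ 2 - z / (2 * t ^ ((3:ℝ)/2))| ≤ |Ybar| + |z| / 2 := by
    calc |Ybar / t ^ 2 - z / (2 * t ^ ((3:ℝ)/2))|
        ≤ |Ybar / t ^ 2| + |z / (2 * t ^ ((3:ℝ)/2))| := abs_sub _ _
      _ = |Ybar| / t ^ 2 + |z| / (2 * t ^ ((3:ℝ)/2)) := by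
          rw [abs_div, abs_div, abs_of_pos (by positivity : (0:ℝ) < t ^ 2),
            abs_of_pos (by positivity : (0:ℝ) < 2 * t ^ ((3:ℝ)/2))]
      _ ≤ |Ybar| + |z| / 2 := by
          refine add_le_add (div_le_self hY (by nlinarith)) ?_
          exact div_le_div_of_nonneg_left (abs_nonneg z) (by norm_num) (by nlinarith)
  have hden : S₀ ^ 2 ≤ (S₀ + (J / 2) * (Ybar / t - z / Real.sqrt t) ^ 2) ^ 2 := by
    have h : S₀ ≤ S₀ + (J / 2) * (Ybar / t - z / Real.sqrt t) ^ 2 :=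
      le_add_of_nonneg_right (by positivity)
    nlinarith
  have step1 : g * J ^ 2 * |Ybar / t - z / Real.sqrt t|
        * |Ybar / t ^ 2 - z / (2 * t ^ ((3:ℝ)/2))| /
        (S₀ + (J / 2) * (Ybar / t - z / Real.sqrt t) ^ 2) ^ 2
      ≤ g * J ^ 2 * (|Ybar| + |z|) * (|Ybar| + |z| / 2) / S₀ ^ 2 := by
    gcongr
  refine step1.trans ?_
  have hq : (|Ybar| + |z|) * (|Ybar| + |z| / 2)
      ≤ (|Ybar| ^ 2 + 3/4 * |Ybar|) + (3/4 * |Ybar| + 1/2) * z ^ 2 := by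
    nlinarith [sq_nonneg (|z| - 1), sq_abs z, abs_nonneg z]
  have he : g * J ^ 2 * (|Ybar| + |z|) * (|Ybar| + |z| / 2) / S₀ ^ 2
      = g * (J ^ 2 / S₀ ^ 2 * ((|Ybar| + |z|) * (|Ybar| + |z| / 2))) := by
    field_simp
  rw [he, show (J ^ 2 / S₀ ^ 2) * (|Ybar| ^ 2 + 3/4 * |Ybar|)
        + (J ^ 2 / S₀ ^ 2) * (3/4 * |Ybar| + 1/2) * z ^ 2
      = J ^ 2 / S₀ ^ 2 * ((|Ybar| ^ 2 + 3/4 * |Ybar|) + (3/4 * |Ybar| + 1/2) * z ^ 2) by ring]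
  exact mul_le_mul_of_nonneg_left (mul_le_mul_of_nonneg_left hq (by positivity)) hg
open MeasureTheory ProbabilityTheory Real Set
open scoped ENNReal

/-- The expected local Lipschitz constant `E[D_x]` of the
random map defining the Gibbs sampler chain `P₁` (case `K = 1`) is at most
`r₂ = (α + J/2)(J²/Σ₀²)(|Ȳ| + 1)(|Ȳ| + 1/2)` for every `x > 0`. -/
theorem stmt11 (J : ℕ) (hJ : 1 ≤ J) (α S₀ Ybar : ℝ) (hα : 0 < α) (hS₀ : 0 < S₀)
    (D : ℝ → ℝ × ℝ → ℝ)
    (hD : ∀ x gz, D x gz =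
      gz.1 * (J : ℝ) ^ 2 *
        |Ybar / (x * J + 1) - gz.2 / Real.sqrt (x * J + 1)| *
        |Ybar / (x * J + 1) ^ 2 - gz.2 / (2 * (x * J + 1) ^ ((3 : ℝ) / 2))| /
        (S₀ + ((J : ℝ) / 2) * (Ybar / (x * J + 1) - gz.2 / Real.sqrt (x * J + 1)) ^ 2) ^ 2)
    (r₂ : ℝ)
    (hr₂ : r₂ = (α + (J : ℝ) / 2) * ((J : ℝ) ^ 2 / S₀ ^ 2) * (|Ybar| + 1) * (|Ybar| + 1 / 2))
    (x : ℝ) (hx : 0 < x) :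
    ∫⁻ gz, ENNReal.ofReal (D x gz)
        ∂((gammaMeasure (α + J / 2) 1).prod (gaussianReal 0 1))
      ≤ ENNReal.ofReal r₂ := by
  have hJ1 : (1:ℝ) ≤ (J:ℝ) := by exact_mod_cast hJ
  have ht : (1:ℝ) ≤ x * J + 1 := by nlinarith
  have hY : (0:ℝ) ≤ |Ybar| := abs_nonneg _
  set u : ℝ := (J:ℝ) ^ 2 / S₀ ^ 2 * (|Ybar| ^ 2 + 3/4 * |Ybar|) with hudef
  set v : ℝ := (J:ℝ) ^ 2 / S₀ ^ 2 * (3/4 * |Ybar| + 1/2) with hvdef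
  have hu : 0 ≤ u := by positivity
  have hv : 0 ≤ v := by positivity
  have hbd : ∀ gz : ℝ × ℝ, ENNReal.ofReal (D x gz)
      ≤ ENNReal.ofReal gz.1 * ENNReal.ofReal (u + v * gz.2 ^ 2) := by
    rintro ⟨g, z⟩
    show ENNReal.ofReal (D x (g, z))
      ≤ ENNReal.ofReal g * ENNReal.ofReal (u + v * z ^ 2)
    rcases le_or_gt g 0 with hg | hg
    · have hD0 : D x (g, z) ≤ 0 := by
        rw [hD]
        exact aux_nonpos _ _ _ _ _ _ _ hg
      rw [ENNReal.ofReal_of_nonpos hD0]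
      exact zero_le
    · rw [← ENNReal.ofReal_mul hg.le]
      apply ENNReal.ofReal_le_ofReal
      rw [hD]
      exact aux_bound (J:ℝ) S₀ Ybar (x * J + 1) g z hJ1 hS₀ ht hg.le
  have hαJ : (0:ℝ) < α + (J:ℝ)/2 := by positivity
  calc ∫⁻ gz, ENNReal.ofReal (D x gz)
          ∂((gammaMeasure (α + J / 2) 1).prod (gaussianReal 0 1))
      ≤ ∫⁻ gz, ENNReal.ofReal gz.1 * ENNReal.ofReal (u + v * gz.2 ^ 2)
          ∂((gammaMeasure (α + J / 2) 1).prod (gaussianReal 0 1)) := lintegral_mono hbd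
    _ = (∫⁻ g, ENNReal.ofReal g ∂(gammaMeasure (α + J / 2) 1))
          * (∫⁻ z, ENNReal.ofReal (u + v * z ^ 2) ∂(gaussianReal 0 1)) :=
        lintegral_prod_mul ENNReal.measurable_ofReal.aemeasurable
          ((measurable_const.add
            ((measurable_id.pow_const 2).const_mul v)).ennreal_ofReal).aemeasurable
    _ = ENNReal.ofReal (α + (J:ℝ)/2) * ENNReal.ofReal (u + v) := by
        rw [gamma_mean' hαJ]
        congr 1
        have h : ∀ z : ℝ, ENNReal.ofReal (u + v * z ^ 2)
            = ENNReal.ofReal u + ENNReal.ofReal v * ENNReal.ofReal (z ^ 2) := fun z => by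
          rw [ENNReal.ofReal_add hu (by positivity), ENNReal.ofReal_mul hv]
        simp_rw [h]
        rw [lintegral_add_left measurable_const,
          lintegral_const_mul _ (measurable_id'.pow_const 2).ennreal_ofReal,
          gauss_sq', lintegral_const, measure_univ, mul_one, mul_one,
          ENNReal.ofReal_add hu hv]
    _ = ENNReal.ofReal r₂ := by
        rw [← ENNReal.ofReal_mul hαJ.le]
        congr 1
        rw [hr₂, hudef, hvdef]
        ring
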